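/- Define binomials g_{ij} = x_i y_j - x_j y_i for 1 ≤ i < j ≤ n, and cubics h^{(1)}_{ijk} = x_i z_j x_k - z_i x_j x_k, h^{(2)}_{ijk} = y_i z_j y_k - z_i y_j y_k, h^{(3)}_{ijk} = y_i z_j x_k - z_i y_j x_k for 1 ≤ i < j < k ≤ n. Then these binomials form a Gröbner basis of the ideal L_n they generate with respect to the lexicographic order with x_1 ≻ ... ≻ x_n ≻ y_1 ≻ ... ≻ y_n ≻ z_1 ≻ ... ≻ z_n; in particular the initial ideal of L_n equals N_n = ⟨x_i y_j : i<j⟩ + ⟨x_i z_j x_k, y_i z_j y_k, y_i z_j x_k : i<j<k⟩. -/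

import Mathlib

open MvPolynomial

noncomputable section

variable (K : Type*) [Field K] (n : ℕ)

/-- The variable set: `(r, i)` is the `i`-th variable of block `r` (`r = 0,1,2` giving
`x_i, y_i, z_i`), ordered lexicographically so that
`x_1 < x_2 < ⋯ < x_n < y_1 < ⋯ < y_n < z_1 < ⋯ < z_n`
(the least variable has the highest precedence in the induced lex monomial order
`x_1 ≻ ⋯ ≻ x_n ≻ y_1 ≻ ⋯ ≻ y_n ≻ z_1 ≻ ⋯ ≻ z_n`). -/
abbrev σv (n : ℕ) := Lex (Fin 3 × Fin n)

def Xv (i : Fin n) : MvPolynomial (σv n) K := MvPolynomial.X (toLex (0, i))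
def Yv (i : Fin n) : MvPolynomial (σv n) K := MvPolynomial.X (toLex (1, i))
def Zv (i : Fin n) : MvPolynomial (σv n) K := MvPolynomial.X (toLex (2, i))

/-- The initial ideal of `I` for the lexicographic monomial order: the ideal generated
by the leading monomials (maximal support elements in the lexicographic order on
exponent vectors) of all nonzero elements of `I`. -/
def initialIdeal (I : Ideal (MvPolynomial (σv n) K)) : Ideal (MvPolynomial (σv n) K) :=
  Ideal.span {q | ∃ f ∈ I, ∃ d : (σv n) →₀ ℕ, d ∈ f.support ∧
    (∀ e ∈ f.support, toLex e ≤ toLex d) ∧ q = monomial d (1 : K)}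

/-- The binomial ideal `L_n` generated by `x_i y_j - x_j y_i` (`i<j`) and
`x_i z_j x_k - z_i x_j x_k`, `y_i z_j y_k - z_i y_j y_k`, `y_i z_j x_k - z_i y_j x_k`
(`i<j<k`). -/
def Lideal : Ideal (MvPolynomial (σv n) K) :=
  Ideal.span ({p | ∃ i j : Fin n, i < j ∧ p = Xv K n i * Yv K n j - Xv K n j * Yv K n i} ∪
    {p | ∃ i j k : Fin n, i < j ∧ j < k ∧
      (p = Xv K n i * Zv K n j * Xv K n k - Zv K n i * Xv K n j * Xv K n k ∨
       p = Yv K n i * Zv K n j * Yv K n k - Zv K n i * Yv K n j * Yv K n k ∨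
       p = Yv K n i * Zv K n j * Xv K n k - Zv K n i * Yv K n j * Xv K n k)})

/-- The monomial ideal `N_n` of leading terms of the generators of `L_n`. -/
def Nideal : Ideal (MvPolynomial (σv n) K) :=
  Ideal.span ({p | ∃ i j : Fin n, i < j ∧ p = Xv K n i * Yv K n j} ∪
    {p | ∃ i j k : Fin n, i < j ∧ j < k ∧
      (p = Xv K n i * Zv K n j * Xv K n k ∨
       p = Yv K n i * Zv K n j * Yv K n k ∨
       p = Yv K n i * Zv K n j * Xv K n k)})

namespace Stmt8Aux
variable {n : ℕ}

lemma single_app (r s : Fin 3) (i l : Fin n) :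
    (Finsupp.single (toLex (r,i)) (1:ℕ)) (toLex (s,l)) = if r = s ∧ i = l then 1 else 0 := by
  rw [Finsupp.single_apply]
  simp [toLex_inj, Prod.ext_iff]

noncomputable def phiA (d : σv n →₀ ℕ) : ℕ := ∑ i, d (toLex (0,i))
noncomputable def phiB (d : σv n →₀ ℕ) : ℕ := ∑ i, d (toLex (1,i))
noncomputable def phiT (d : σv n →₀ ℕ) : Fin n → ℕ :=
  fun i => d (toLex (0,i)) + d (toLex (1,i)) + d (toLex (2,i))
open Classical in
noncomputable def phiZ (d : σv n →₀ ℕ) : Fin n → ℕ :=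
  fun i => if ∀ j, i < j → d (toLex (0,j)) + d (toLex (1,j)) = 0 then d (toLex (2,i)) else 0
noncomputable def phi (d : σv n →₀ ℕ) : ℕ × ℕ × (Fin n → ℕ) × (Fin n → ℕ) :=
  (phiA d, phiB d, phiT d, phiZ d)

lemma phiA_add (a b : σv n →₀ ℕ) : phiA (a+b) = phiA a + phiA b := by
  simp [phiA, Finset.sum_add_distrib]
lemma phiB_add (a b : σv n →₀ ℕ) : phiB (a+b) = phiB a + phiB b := by
  simp [phiB, Finset.sum_add_distrib]
lemma phiT_add (a b : σv n →₀ ℕ) : phiT (a+b) = fun i => phiT a i + phiT b i := by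
  funext i; simp [phiT]; ring
lemma phiA_single (r : Fin 3) (i : Fin n) :
    phiA (Finsupp.single (toLex (r,i)) 1) = if r = 0 then 1 else 0 := by
  simp only [phiA, single_app]
  by_cases h : r = 0 <;> simp [h]
lemma phiB_single (r : Fin 3) (i : Fin n) :
    phiB (Finsupp.single (toLex (r,i)) 1) = if r = 1 then 1 else 0 := by
  simp only [phiB, single_app]
  by_cases h : r = 1 <;> simp [h]
lemma phiT_single (r : Fin 3) (i : Fin n) :
    phiT (Finsupp.single (toLex (r,i)) 1) = fun l => if i = l then 1 else 0 := by
  funext l; fin_cases r <;> simp [phiT, single_app]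

lemma phiZ_congr (m d1 d2 : σv n →₀ ℕ) (k : Fin n)
    (h1 : ∀ l, k < l → d1 (toLex (0,l)) + d1 (toLex (1,l)) = 0)
    (h2 : ∀ l, k < l → d2 (toLex (0,l)) + d2 (toLex (1,l)) = 0)
    (h1k : d1 (toLex (0,k)) + d1 (toLex (1,k)) ≠ 0)
    (h2k : d2 (toLex (0,k)) + d2 (toLex (1,k)) ≠ 0)
    (hz : ∀ l, k ≤ l → d1 (toLex (2,l)) = d2 (toLex (2,l))) :
    phiZ (m + d1) = phiZ (m + d2) := by
  funext l
  have key : ∀ (da : σv n →₀ ℕ), (∀ l', k < l' → da (toLex (0,l')) + da (toLex (1,l')) = 0) →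
      (da (toLex (0,k)) + da (toLex (1,k)) ≠ 0) →
      ((∀ j, l < j → (m + da) (toLex (0,j)) + (m + da) (toLex (1,j)) = 0) ↔
        (k ≤ l ∧ ∀ j, l < j → m (toLex (0,j)) + m (toLex (1,j)) = 0)) := by
    intro da ha hak
    constructor
    · intro hc
      have hkl : k ≤ l := by
        by_contra hkl
        push_neg at hkl
        have := hc k hkl
        simp only [Finsupp.add_apply] at this
        omega
      refine ⟨hkl, fun j hj => ?_⟩
      have := hc j hj
      simp only [Finsupp.add_apply] at this
      omega
    · rintro ⟨hkl, hm⟩ j hj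
      have := hm j hj
      have := ha j (lt_of_le_of_lt hkl hj)
      simp only [Finsupp.add_apply]
      omega
  simp only [phiZ]
  rw [if_congr ((key d1 h1 h1k).trans (key d2 h2 h2k).symm) rfl rfl]
  by_cases hc : ∀ j, l < j → (m + d2) (toLex (0,j)) + (m + d2) (toLex (1,j)) = 0
  · rw [if_pos hc, if_pos hc]
    have hkl : k ≤ l := ((key d2 h2 h2k).mp hc).1
    simp only [Finsupp.add_apply, hz l hkl]
  · rw [if_neg hc, if_neg hc]

lemma phi_move1 (m : σv n →₀ ℕ) {i j : Fin n} (hij : i < j) :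
    phi (m + (Finsupp.single (toLex (0,i)) 1 + Finsupp.single (toLex (1,j)) 1)) =
    phi (m + (Finsupp.single (toLex (0,j)) 1 + Finsupp.single (toLex (1,i)) 1)) := by
  have hji : j ≠ i := hij.ne'
  have hijne : i ≠ j := hij.ne
  simp only [phi, phiA_add, phiB_add, phiT_add, phiA_single, phiB_single, phiT_single, Prod.mk.injEq]
  refine ⟨by norm_num, by norm_num, ?_, ?_⟩
  · funext l; by_cases h1 : i = l <;> by_cases h2 : j = l <;> simp [h1, h2] <;> omega
  · apply phiZ_congr (k := j)
    · intro l hl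
      have h1 : i ≠ l := (hij.trans hl).ne
      have h2 : j ≠ l := hl.ne
      simp [Finsupp.add_apply, single_app, h1, h2]
    · intro l hl
      have h1 : i ≠ l := (hij.trans hl).ne
      have h2 : j ≠ l := hl.ne
      simp [Finsupp.add_apply, single_app, h1, h2]
    · simp [Finsupp.add_apply, single_app, hijne]
    · simp [Finsupp.add_apply, single_app, hji]
    · intro l _
      simp [Finsupp.add_apply, single_app]

lemma phi_move2 (m : σv n →₀ ℕ) (b w : Fin 3) (hb : b ≠ 2) (hw : w ≠ 2) {i j k : Fin n}
    (hij : i < j) (hjk : j < k) :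
    phi (m + (Finsupp.single (toLex (b,i)) 1 + Finsupp.single (toLex (2,j)) 1
        + Finsupp.single (toLex (w,k)) 1)) =
    phi (m + (Finsupp.single (toLex (2,i)) 1 + Finsupp.single (toLex (b,j)) 1
        + Finsupp.single (toLex (w,k)) 1)) := by
  have hik : i < k := hij.trans hjk
  have h1 : i ≠ j := hij.ne
  have h2 : j ≠ k := hjk.ne
  have h3 : i ≠ k := hik.ne
  simp only [phi, Prod.mk.injEq]
  refine ⟨?_, ?_, ?_, ?_⟩
  · simp only [phiA_add, phiA_single]
    ring
  · simp only [phiB_add, phiB_single]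
    ring
  · funext l
    simp only [phiT_add, phiT_single]
  · apply phiZ_congr (k := k)
    · intro l hl
      have g1 : i ≠ l := (hik.trans hl).ne
      have g2 : j ≠ l := (hjk.trans hl).ne
      have g3 : k ≠ l := hl.ne
      simp [Finsupp.add_apply, single_app, g1, g2, g3]
    · intro l hl
      have g1 : i ≠ l := (hik.trans hl).ne
      have g2 : j ≠ l := (hjk.trans hl).ne
      have g3 : k ≠ l := hl.ne
      simp [Finsupp.add_apply, single_app, g1, g2, g3]
    · fin_cases b <;> fin_cases w <;> simp_all [Finsupp.add_apply, single_app]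
    · fin_cases b <;> fin_cases w <;> simp_all [Finsupp.add_apply, single_app]
    · intro l hl
      have g1 : i ≠ l := ne_of_lt (lt_of_lt_of_le hik hl)
      have g2 : j ≠ l := ne_of_lt (lt_of_lt_of_le hjk hl)
      fin_cases b <;> fin_cases w <;>
        simp_all [Finsupp.add_apply, single_app]

section Hom
variable (K : Type*) [Field K]

lemma X_mul_X (a b : σv n) :
    (X a : MvPolynomial (σv n) K) * X b = monomial (Finsupp.single a 1 + Finsupp.single b 1) 1 := by
  rw [X, X, monomial_mul, one_mul]

lemma X_mul_X_mul_X (a b c : σv n) :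
    (X a : MvPolynomial (σv n) K) * X b * X c =
      monomial (Finsupp.single a 1 + Finsupp.single b 1 + Finsupp.single c 1) 1 := by
  rw [X_mul_X, X, monomial_mul, one_mul]

noncomputable def Phi :
    MvPolynomial (σv n) K →+ ((ℕ × ℕ × (Fin n → ℕ) × (Fin n → ℕ)) →₀ K) :=
  (Finsupp.mapDomain.addMonoidHom phi).comp AddMonoidAlgebra.coeffAddEquiv.toAddMonoidHom

lemma Phi_monomial (d : σv n →₀ ℕ) (c : K) :
    Phi K (monomial d c) = Finsupp.single (phi d) c := by
  rw [← single_eq_monomial]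
  exact Finsupp.mapDomain_single

lemma Phi_kill (f : MvPolynomial (σv n) K) (hf : f ∈ Lideal K n) : Phi K f = 0 := by
  have key : ∀ g ∈ ({p | ∃ i j : Fin n, i < j ∧ p = Xv K n i * Yv K n j - Xv K n j * Yv K n i} ∪
      {p | ∃ i j k : Fin n, i < j ∧ j < k ∧
        (p = Xv K n i * Zv K n j * Xv K n k - Zv K n i * Xv K n j * Xv K n k ∨
         p = Yv K n i * Zv K n j * Yv K n k - Zv K n i * Yv K n j * Yv K n k ∨
         p = Yv K n i * Zv K n j * Xv K n k - Zv K n i * Yv K n j * Xv K n k)} :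
        Set (MvPolynomial (σv n) K)),
      ∀ q : MvPolynomial (σv n) K, Phi K (q * g) = 0 := by
    rintro g hg q
    induction q using MvPolynomial.induction_on' with
    | add p1 p2 ih1 ih2 => rw [add_mul, map_add, ih1, ih2, add_zero]
    | monomial u a =>
      rcases hg with ⟨i, j, hij, rfl⟩ | ⟨i, j, k, hij, hjk, rfl | rfl | rfl⟩
      · simp only [Xv, Yv]
        rw [X_mul_X, X_mul_X, mul_sub, monomial_mul, monomial_mul, map_sub,
          Phi_monomial, Phi_monomial, phi_move1 u hij, sub_self]
      · simp only [Xv, Zv]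
        rw [X_mul_X_mul_X, X_mul_X_mul_X, mul_sub, monomial_mul,
          monomial_mul, map_sub, Phi_monomial, Phi_monomial,
          phi_move2 u 0 0 (by decide) (by decide) hij hjk, sub_self]
      · simp only [Yv, Zv]
        rw [X_mul_X_mul_X, X_mul_X_mul_X, mul_sub, monomial_mul,
          monomial_mul, map_sub, Phi_monomial, Phi_monomial,
          phi_move2 u 1 1 (by decide) (by decide) hij hjk, sub_self]
      · simp only [Xv, Yv, Zv]
        rw [X_mul_X_mul_X, X_mul_X_mul_X, mul_sub, monomial_mul,
          monomial_mul, map_sub, Phi_monomial, Phi_monomial,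
          phi_move2 u 1 0 (by decide) (by decide) hij hjk, sub_self]
  have h1 : ∀ q : MvPolynomial (σv n) K, Phi K (q * f) = 0 := by
    refine Submodule.span_induction (p := fun x _ => ∀ q : MvPolynomial (σv n) K,
      Phi K (q * x) = 0) (fun x h => key x h) ?_ ?_ ?_ hf
    · intro q; rw [mul_zero, map_zero]
    · intro x y _ _ hx hy q; rw [mul_add, map_add, hx, hy, add_zero]
    · intro a x _ hx q
      rw [smul_eq_mul, ← mul_assoc]
      exact hx (q * a)
  simpa using h1 1
end Hom

section Min
variable {n : ℕ}

def IsStd (d : σv n →₀ ℕ) : Prop :=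
  (∀ i j : Fin n, i < j → d (toLex (0,i)) = 0 ∨ d (toLex (1,j)) = 0) ∧
  (∀ i j k : Fin n, i < j → j < k →
    d (toLex (0,i)) = 0 ∨ d (toLex (2,j)) = 0 ∨ d (toLex (0,k)) = 0) ∧
  (∀ i j k : Fin n, i < j → j < k →
    d (toLex (1,i)) = 0 ∨ d (toLex (2,j)) = 0 ∨ d (toLex (1,k)) = 0) ∧
  (∀ i j k : Fin n, i < j → j < k →
    d (toLex (1,i)) = 0 ∨ d (toLex (2,j)) = 0 ∨ d (toLex (0,k)) = 0)

lemma exists_gt {f g : Fin n → ℕ} (hs : ∑ l, f l = ∑ l, g l) {i : Fin n} (hlt : g i < f i)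
    (hag : ∀ l, l < i → f l = g l) : ∃ k, i < k ∧ f k < g k := by
  by_contra hcon
  push_neg at hcon
  have hle : ∀ l ∈ Finset.univ, g l ≤ f l := by
    intro l _
    rcases lt_trichotomy l i with h|h|h
    · exact (hag l h).ge
    · subst h; exact hlt.le
    · exact hcon l h
  have := Finset.sum_lt_sum hle ⟨i, Finset.mem_univ i, hlt⟩
  omega

lemma std_min {d e : σv n →₀ ℕ} (hd : IsStd d) (hphi : phi d = phi e) (hne : d ≠ e) :
    toLex d < toLex e := by
  obtain ⟨hS1, hS2, hS3, hS4⟩ := hd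
  have hA : phiA d = phiA e := congrArg (fun p => p.1) hphi
  have hB : phiB d = phiB e := congrArg (fun p => p.2.1) hphi
  have hTl : ∀ l, d (toLex (0,l)) + d (toLex (1,l)) + d (toLex (2,l))
      = e (toLex (0,l)) + e (toLex (1,l)) + e (toLex (2,l)) :=
    fun l => congrFun (congrArg (fun p => p.2.2.1) hphi) l
  have hZl : ∀ l, phiZ d l = phiZ e l :=
    fun l => congrFun (congrArg (fun p => p.2.2.2) hphi) l
  rcases lt_trichotomy (toLex d) (toLex e) with h|h|h
  · exact h
  · exact absurd (toLex_inj.mp h) hne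
  exfalso
  obtain ⟨v, hbelow, hv⟩ := h
  obtain ⟨r, i⟩ := v
  have hv' : e (toLex (r,i)) < d (toLex (r,i)) := hv
  have hr3 : r = 0 ∨ r = 1 ∨ r = 2 := by fin_cases r <;> simp
  have zext : ∀ k : Fin n, (∀ w, k < w → d (toLex (0,w)) = 0 ∧ d (toLex (1,w)) = 0) →
      d (toLex (2,k)) ≠ 0 → e (toLex (2,k)) = d (toLex (2,k)) := by
    intro k hw hz2
    have h2 := hZl k
    simp only [phiZ] at h2
    rw [if_pos (fun j hj => by have := hw j hj; omega)] at h2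
    by_cases hc : ∀ j, k < j → e (toLex (0,j)) + e (toLex (1,j)) = 0
    · rw [if_pos hc] at h2; omega
    · rw [if_neg hc] at h2; omega
  rcases hr3 with rfl | rfl | rfl
  · -- r = 0
    have hv2 : e (toLex ((0:Fin 3),i)) < d (toLex ((0:Fin 3),i)) := hv'
    have hag : ∀ l, l < i → d (toLex ((0:Fin 3),l)) = e (toLex ((0:Fin 3),l)) := fun l hl =>
      (hbelow (toLex (0,l)) ((Prod.Lex.toLex_lt_toLex (x := ((0:Fin 3),l)) (y := (0,i))).mpr (Or.inr ⟨rfl, hl⟩))).symm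
    obtain ⟨k, hik, hk⟩ := exists_gt (f := fun l => d (toLex (0,l)))
      (g := fun l => e (toLex (0,l))) hA hv2 hag
    rcases Nat.eq_zero_or_pos (d (toLex (1,k))) with hy | hy
    · have hz2 : d (toLex (2,k)) ≠ 0 := by have := hTl k; omega
      by_cases hw : ∀ w, k < w → d (toLex (0,w)) = 0 ∧ d (toLex (1,w)) = 0
      · have h3 := zext k hw hz2
        have := hTl k
        omega
      · push_neg at hw
        obtain ⟨w, hkw, hw0⟩ := hw
        by_cases hxw : d (toLex (0,w)) = 0
        · have hyw := hw0 hxw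
          have := hS1 i w (hik.trans hkw)
          omega
        · have := hS2 i k w hik hkw
          omega
    · have := hS1 i k hik
      omega
  · -- r = 1
    have hv2 : e (toLex ((1:Fin 3),i)) < d (toLex ((1:Fin 3),i)) := hv'
    have hag : ∀ l, l < i → d (toLex ((1:Fin 3),l)) = e (toLex ((1:Fin 3),l)) := fun l hl =>
      (hbelow (toLex (1,l)) ((Prod.Lex.toLex_lt_toLex (x := ((1:Fin 3),l)) (y := (1,i))).mpr (Or.inr ⟨rfl, hl⟩))).symm
    have hx : ∀ l, e (toLex ((0:Fin 3),l)) = d (toLex ((0:Fin 3),l)) := fun l =>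
      hbelow (toLex (0,l)) ((Prod.Lex.toLex_lt_toLex (x := ((0:Fin 3),l)) (y := (1,i))).mpr (Or.inl (show (0:Fin 3) < 1 by decide)))
    obtain ⟨k, hik, hk⟩ := exists_gt (f := fun l => d (toLex (1,l)))
      (g := fun l => e (toLex (1,l))) hB hv2 hag
    have hz2 : d (toLex (2,k)) ≠ 0 := by have h := hTl k; have := hx k; omega
    by_cases hw : ∀ w, k < w → d (toLex (0,w)) = 0 ∧ d (toLex (1,w)) = 0
    · have h3 := zext k hw hz2
      have h4 := hTl k
      have := hx k
      omega
    · push_neg at hw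
      obtain ⟨w, hkw, hw0⟩ := hw
      by_cases hxw : d (toLex (0,w)) = 0
      · have hyw := hw0 hxw
        have := hS3 i k w hik hkw
        omega
      · have := hS4 i k w hik hkw
        omega
  · -- r = 2
    have hv2 : e (toLex ((2:Fin 3),i)) < d (toLex ((2:Fin 3),i)) := hv'
    have hv2 : e (toLex ((2:Fin 3),i)) < d (toLex ((2:Fin 3),i)) := hv'
    have hx : e (toLex ((0:Fin 3),i)) = d (toLex ((0:Fin 3),i)) := hbelow (toLex (0,i)) ((Prod.Lex.toLex_lt_toLex (x := ((0:Fin 3),i)) (y := (2,i))).mpr (Or.inl (show (0:Fin 3) < 2 by decide)))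
    have hy : e (toLex ((1:Fin 3),i)) = d (toLex ((1:Fin 3),i)) := hbelow (toLex (1,i)) ((Prod.Lex.toLex_lt_toLex (x := ((1:Fin 3),i)) (y := (2,i))).mpr (Or.inl (show (1:Fin 3) < 2 by decide)))
    have := hTl i
    omega

end Min

section Rest
variable {n : ℕ} (K : Type*) [Field K]

lemma exists_other {f : MvPolynomial (σv n) K} (hmap : Phi K f = 0) {d : σv n →₀ ℕ}
    (hd : d ∈ f.support) : ∃ e ∈ f.support, e ≠ d ∧ phi e = phi d := by
  by_contra hcon
  push_neg at hcon
  have key : (Finsupp.mapDomain (phi (n := n)) (AddMonoidAlgebra.coeff f)) (phi d) ≠ 0 := by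
    rw [Finsupp.mapDomain, Finsupp.sum_apply, Finsupp.sum]
    rw [Finset.sum_eq_single d]
    · rw [Finsupp.single_apply, if_pos rfl]
      exact MvPolynomial.mem_support_iff.mp hd
    · intro e he hne
      rw [Finsupp.single_apply, if_neg]
      exact hcon e he hne
    · intro hd'
      exact absurd hd hd'
  have : Finsupp.mapDomain (phi (n := n)) (AddMonoidAlgebra.coeff f) = 0 := hmap
  rw [this] at key
  exact key rfl

lemma le_single2 {d : σv n →₀ ℕ} {u v : σv n} (huv : u ≠ v) (h1 : d u ≠ 0) (h2 : d v ≠ 0) :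
    Finsupp.single u 1 + Finsupp.single v 1 ≤ d := by
  rw [Finsupp.le_def]
  intro a
  rw [Finsupp.add_apply, Finsupp.single_apply, Finsupp.single_apply]
  by_cases eu : u = a <;> by_cases ev : v = a
  · exact absurd (eu.trans ev.symm) huv
  · rw [if_pos eu, if_neg ev]; subst eu; omega
  · rw [if_neg eu, if_pos ev]; subst ev; omega
  · rw [if_neg eu, if_neg ev]; omega

lemma le_single3 {d : σv n →₀ ℕ} {u v w : σv n} (huv : u ≠ v) (huw : u ≠ w) (hvw : v ≠ w)
    (h1 : d u ≠ 0) (h2 : d v ≠ 0) (h3 : d w ≠ 0) :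
    Finsupp.single u 1 + Finsupp.single v 1 + Finsupp.single w 1 ≤ d := by
  rw [Finsupp.le_def]
  intro a
  rw [Finsupp.add_apply, Finsupp.add_apply, Finsupp.single_apply, Finsupp.single_apply,
    Finsupp.single_apply]
  by_cases eu : u = a <;> by_cases ev : v = a <;> by_cases ew : w = a
  · exact absurd (eu.trans ev.symm) huv
  · exact absurd (eu.trans ev.symm) huv
  · exact absurd (eu.trans ew.symm) huw
  · rw [if_pos eu, if_neg ev, if_neg ew]; subst eu; omega
  · exact absurd (ev.trans ew.symm) hvw
  · rw [if_neg eu, if_pos ev, if_neg ew]; subst ev; omega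
  · rw [if_neg eu, if_neg ev, if_pos ew]; subst ew; omega
  · rw [if_neg eu, if_neg ev, if_neg ew]; omega

lemma lex_lt2 {i j : Fin n} (hij : i < j) :
    toLex (Finsupp.single (toLex ((0:Fin 3),j)) 1 + Finsupp.single (toLex ((1:Fin 3),i)) 1)
    < toLex (Finsupp.single (toLex ((0:Fin 3),i)) 1 + Finsupp.single (toLex ((1:Fin 3),j)) 1) := by
  refine ⟨toLex ((0:Fin 3), i), ?_, ?_⟩
  · intro u hu
    obtain ⟨s, l⟩ := u
    rcases (Prod.Lex.toLex_lt_toLex (x := (s,l)) (y := ((0:Fin 3),i))).mp hu with h | ⟨h1, h2⟩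
    · exact absurd h (Fin.not_lt_zero s)
    · subst h1
      have g1 : i ≠ l := h2.ne'
      have g2 : j ≠ l := (h2.trans hij).ne'
      show (Finsupp.single (toLex ((0:Fin 3),j)) 1 + Finsupp.single (toLex ((1:Fin 3),i)) 1
            : σv n →₀ ℕ) (toLex ((0:Fin 3),l))
        = (Finsupp.single (toLex ((0:Fin 3),i)) 1 + Finsupp.single (toLex ((1:Fin 3),j)) 1
            : σv n →₀ ℕ) (toLex ((0:Fin 3),l))
      simp [Finsupp.add_apply, single_app, g1, g2]
  · have g1 : j ≠ i := hij.ne'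
    show (Finsupp.single (toLex ((0:Fin 3),j)) 1 + Finsupp.single (toLex ((1:Fin 3),i)) 1
            : σv n →₀ ℕ) (toLex ((0:Fin 3),i))
      < (Finsupp.single (toLex ((0:Fin 3),i)) 1 + Finsupp.single (toLex ((1:Fin 3),j)) 1
            : σv n →₀ ℕ) (toLex ((0:Fin 3),i))
    simp [Finsupp.add_apply, single_app, g1]

lemma lex_lt3 (b w : Fin 3) (hb : b ≠ 2) (hw : w ≠ 2) {i j k : Fin n}
    (hij : i < j) (hjk : j < k) :
    toLex (Finsupp.single (toLex ((2:Fin 3),i)) 1 + Finsupp.single (toLex (b,j)) 1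
        + Finsupp.single (toLex (w,k)) 1)
    < toLex (Finsupp.single (toLex (b,i)) 1 + Finsupp.single (toLex ((2:Fin 3),j)) 1
        + Finsupp.single (toLex (w,k)) 1) := by
  have hik : i < k := hij.trans hjk
  have h2b : (2:Fin 3) ≠ b := fun h => hb h.symm
  have hji : j ≠ i := hij.ne'
  have hki : k ≠ i := hik.ne'
  refine ⟨toLex (b, i), ?_, ?_⟩
  · intro u hu
    obtain ⟨s, l⟩ := u
    rcases (Prod.Lex.toLex_lt_toLex (x := (s,l)) (y := (b,i))).mp hu with h | ⟨h1, h2⟩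
    · -- s < b
      have hsb : s ≠ b := h.ne
      have hs2 : s ≠ 2 := by
        intro hs
        subst hs
        have hbv : b.val ≠ 2 := fun hh => hb (Fin.ext hh)
        have := Fin.lt_def.mp h
        simp at this
        omega
      show (Finsupp.single (toLex ((2:Fin 3),i)) 1 + Finsupp.single (toLex (b,j)) 1
          + Finsupp.single (toLex (w,k)) 1 : σv n →₀ ℕ) (toLex (s,l))
        = (Finsupp.single (toLex (b,i)) 1 + Finsupp.single (toLex ((2:Fin 3),j)) 1
          + Finsupp.single (toLex (w,k)) 1 : σv n →₀ ℕ) (toLex (s,l))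
      have g1 : b ≠ s := fun hh => hsb hh.symm
      have g2 : (2:Fin 3) ≠ s := fun hh => hs2 hh.symm
      simp [Finsupp.add_apply, single_app, g1, g2]
    · obtain rfl := h1.symm
      have g1 : i ≠ l := h2.ne'
      have g2 : j ≠ l := (h2.trans hij).ne'
      have g3 : k ≠ l := (h2.trans hik).ne'
      show (Finsupp.single (toLex ((2:Fin 3),i)) 1 + Finsupp.single (toLex (b,j)) 1
          + Finsupp.single (toLex (w,k)) 1 : σv n →₀ ℕ) (toLex (b,l))
        = (Finsupp.single (toLex (b,i)) 1 + Finsupp.single (toLex ((2:Fin 3),j)) 1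
          + Finsupp.single (toLex (w,k)) 1 : σv n →₀ ℕ) (toLex (b,l))
      simp [Finsupp.add_apply, single_app, g1, g2, g3, h2b]
  · show (Finsupp.single (toLex ((2:Fin 3),i)) 1 + Finsupp.single (toLex (b,j)) 1
          + Finsupp.single (toLex (w,k)) 1 : σv n →₀ ℕ) (toLex (b,i))
      < (Finsupp.single (toLex (b,i)) 1 + Finsupp.single (toLex ((2:Fin 3),j)) 1
          + Finsupp.single (toLex (w,k)) 1 : σv n →₀ ℕ) (toLex (b,i))
    simp [Finsupp.add_apply, single_app, h2b, hji, hki]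

lemma lead_aux {D1 D2 : σv n →₀ ℕ} (hlt : toLex D2 < toLex D1) :
    D1 ∈ (monomial D1 (1:K) - monomial D2 1).support ∧
    ∀ e ∈ (monomial D1 (1:K) - monomial D2 1).support, toLex e ≤ toLex D1 := by
  have hne : D2 ≠ D1 := by
    intro h
    rw [h] at hlt
    exact lt_irrefl _ hlt
  constructor
  · rw [MvPolynomial.mem_support_iff, MvPolynomial.coeff_sub, MvPolynomial.coeff_monomial,
      if_pos rfl, MvPolynomial.coeff_monomial, if_neg hne]
    simp
  · intro e he
    rw [MvPolynomial.mem_support_iff, MvPolynomial.coeff_sub, MvPolynomial.coeff_monomial,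
      MvPolynomial.coeff_monomial] at he
    by_cases h1 : D1 = e
    · subst h1; exact le_refl _
    · by_cases h2 : D2 = e
      · subst h2; exact hlt.le
      · rw [if_neg h1, if_neg h2] at he
        simp at he

end Rest

section NonStd
variable {n : ℕ} (K : Type*) [Field K]

lemma nonstd_mem {d : σv n →₀ ℕ} (h : ¬ IsStd d) :
    (monomial d (1:K)) ∈ Nideal K n := by
  have key : ∀ p : σv n →₀ ℕ, p ≤ d → (monomial p (1:K)) ∈ Nideal K n →
      (monomial d (1:K)) ∈ Nideal K n := by
    intro p hpd hp
    have hEq : monomial d (1:K) = monomial (d - p) 1 * monomial p 1 := by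
      rw [monomial_mul, one_mul, tsub_add_cancel_of_le hpd]
    rw [hEq]
    exact Ideal.mul_mem_left _ _ hp
  rw [IsStd] at h
  rcases not_and_or.mp h with h | h
  · push_neg at h
    obtain ⟨i, j, hij, h1, h2⟩ := h
    refine key _ (le_single2 (by simp [toLex_inj, Prod.ext_iff]) h1 h2) ?_
    apply Ideal.subset_span
    left
    exact ⟨i, j, hij, by simp only [Xv, Yv]; rw [X_mul_X]⟩
  rcases not_and_or.mp h with h | h
  · push_neg at h
    obtain ⟨i, j, k, hij, hjk, h1, h2, h3⟩ := h
    have hik : i ≠ k := (hij.trans hjk).ne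
    refine key _ (le_single3 (by simp [toLex_inj, Prod.ext_iff])
      (by simp [toLex_inj, Prod.ext_iff, hik]) (by simp [toLex_inj, Prod.ext_iff]) h1 h2 h3) ?_
    apply Ideal.subset_span
    right
    exact ⟨i, j, k, hij, hjk, Or.inl (by simp only [Xv, Zv]; rw [X_mul_X_mul_X])⟩
  rcases not_and_or.mp h with h | h
  · push_neg at h
    obtain ⟨i, j, k, hij, hjk, h1, h2, h3⟩ := h
    have hik : i ≠ k := (hij.trans hjk).ne
    refine key _ (le_single3 (by simp [toLex_inj, Prod.ext_iff])
      (by simp [toLex_inj, Prod.ext_iff, hik]) (by simp [toLex_inj, Prod.ext_iff]) h1 h2 h3) ?_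
    apply Ideal.subset_span
    right
    exact ⟨i, j, k, hij, hjk, Or.inr (Or.inl (by simp only [Yv, Zv]; rw [X_mul_X_mul_X]))⟩
  · push_neg at h
    obtain ⟨i, j, k, hij, hjk, h1, h2, h3⟩ := h
    refine key _ (le_single3 (by simp [toLex_inj, Prod.ext_iff])
      (by simp [toLex_inj, Prod.ext_iff]) (by simp [toLex_inj, Prod.ext_iff]) h1 h2 h3) ?_
    apply Ideal.subset_span
    right
    exact ⟨i, j, k, hij, hjk, Or.inr (Or.inr (by simp only [Xv, Yv, Zv]; rw [X_mul_X_mul_X]))⟩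

end NonStd

end Stmt8Aux

/-- The listed binomials form a Gröbner basis of `L_n` for the lexicographic order
`x_1 ≻ ⋯ ≻ x_n ≻ y_1 ≻ ⋯ ≻ y_n ≻ z_1 ≻ ⋯ ≻ z_n`: the initial ideal of `L_n` equals
the ideal `N_n` generated by their leading monomials. -/
theorem stmt8 (hn : 2 ≤ n) :
    initialIdeal K n (Lideal K n) = Nideal K n := by
  apply le_antisymm
  · rw [initialIdeal]
    apply Ideal.span_le.mpr
    rintro q ⟨f, hfL, d, hdsupp, hdmax, rfl⟩
    by_cases hstd : Stmt8Aux.IsStd d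
    · exfalso
      obtain ⟨e, hes, hne, hphi⟩ := Stmt8Aux.exists_other K (Stmt8Aux.Phi_kill K f hfL) hdsupp
      exact absurd (hdmax e hes) (Stmt8Aux.std_min hstd hphi.symm hne.symm).not_ge
    · exact Stmt8Aux.nonstd_mem K hstd
  · rw [Nideal]
    apply Ideal.span_le.mpr
    rintro q (⟨i,j,hij,rfl⟩ | ⟨i,j,k,hij,hjk, rfl|rfl|rfl⟩)
    · have hf : Xv K n i * Yv K n j - Xv K n j * Yv K n i
          = monomial (Finsupp.single (toLex ((0:Fin 3),i)) 1
              + Finsupp.single (toLex ((1:Fin 3),j)) 1) (1:K)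
            - monomial (Finsupp.single (toLex ((0:Fin 3),j)) 1
              + Finsupp.single (toLex ((1:Fin 3),i)) 1) 1 := by
        simp only [Xv, Yv]; rw [Stmt8Aux.X_mul_X, Stmt8Aux.X_mul_X]
      obtain ⟨hmem, hmax⟩ := Stmt8Aux.lead_aux K (Stmt8Aux.lex_lt2 (n := n) hij)
      apply Ideal.subset_span
      refine ⟨Xv K n i * Yv K n j - Xv K n j * Yv K n i,
        Ideal.subset_span (Or.inl ⟨i, j, hij, rfl⟩),
        Finsupp.single (toLex ((0:Fin 3),i)) 1 + Finsupp.single (toLex ((1:Fin 3),j)) 1,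
        ?_, ?_, ?_⟩
      · rw [hf]; exact hmem
      · rw [hf]; exact hmax
      · simp only [Xv, Yv]; rw [Stmt8Aux.X_mul_X]
    · have hf : Xv K n i * Zv K n j * Xv K n k - Zv K n i * Xv K n j * Xv K n k
          = monomial (Finsupp.single (toLex ((0:Fin 3),i)) 1
              + Finsupp.single (toLex ((2:Fin 3),j)) 1
              + Finsupp.single (toLex ((0:Fin 3),k)) 1) (1:K)
            - monomial (Finsupp.single (toLex ((2:Fin 3),i)) 1
              + Finsupp.single (toLex ((0:Fin 3),j)) 1
              + Finsupp.single (toLex ((0:Fin 3),k)) 1) 1 := by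
        simp only [Xv, Zv]; rw [Stmt8Aux.X_mul_X_mul_X, Stmt8Aux.X_mul_X_mul_X]
      obtain ⟨hmem, hmax⟩ := Stmt8Aux.lead_aux K
        (Stmt8Aux.lex_lt3 0 0 (by decide) (by decide) hij hjk)
      apply Ideal.subset_span
      refine ⟨Xv K n i * Zv K n j * Xv K n k - Zv K n i * Xv K n j * Xv K n k,
        Ideal.subset_span (Or.inr ⟨i, j, k, hij, hjk, Or.inl rfl⟩),
        Finsupp.single (toLex ((0:Fin 3),i)) 1 + Finsupp.single (toLex ((2:Fin 3),j)) 1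
          + Finsupp.single (toLex ((0:Fin 3),k)) 1, ?_, ?_, ?_⟩
      · rw [hf]; exact hmem
      · rw [hf]; exact hmax
      · simp only [Xv, Zv]; rw [Stmt8Aux.X_mul_X_mul_X]
    · have hf : Yv K n i * Zv K n j * Yv K n k - Zv K n i * Yv K n j * Yv K n k
          = monomial (Finsupp.single (toLex ((1:Fin 3),i)) 1
              + Finsupp.single (toLex ((2:Fin 3),j)) 1
              + Finsupp.single (toLex ((1:Fin 3),k)) 1) (1:K)
            - monomial (Finsupp.single (toLex ((2:Fin 3),i)) 1
              + Finsupp.single (toLex ((1:Fin 3),j)) 1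
              + Finsupp.single (toLex ((1:Fin 3),k)) 1) 1 := by
        simp only [Yv, Zv]; rw [Stmt8Aux.X_mul_X_mul_X, Stmt8Aux.X_mul_X_mul_X]
      obtain ⟨hmem, hmax⟩ := Stmt8Aux.lead_aux K
        (Stmt8Aux.lex_lt3 1 1 (by decide) (by decide) hij hjk)
      apply Ideal.subset_span
      refine ⟨Yv K n i * Zv K n j * Yv K n k - Zv K n i * Yv K n j * Yv K n k,
        Ideal.subset_span (Or.inr ⟨i, j, k, hij, hjk, Or.inr (Or.inl rfl)⟩),
        Finsupp.single (toLex ((1:Fin 3),i)) 1 + Finsupp.single (toLex ((2:Fin 3),j)) 1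
          + Finsupp.single (toLex ((1:Fin 3),k)) 1, ?_, ?_, ?_⟩
      · rw [hf]; exact hmem
      · rw [hf]; exact hmax
      · simp only [Yv, Zv]; rw [Stmt8Aux.X_mul_X_mul_X]
    · have hf : Yv K n i * Zv K n j * Xv K n k - Zv K n i * Yv K n j * Xv K n k
          = monomial (Finsupp.single (toLex ((1:Fin 3),i)) 1
              + Finsupp.single (toLex ((2:Fin 3),j)) 1
              + Finsupp.single (toLex ((0:Fin 3),k)) 1) (1:K)
            - monomial (Finsupp.single (toLex ((2:Fin 3),i)) 1
              + Finsupp.single (toLex ((1:Fin 3),j)) 1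
              + Finsupp.single (toLex ((0:Fin 3),k)) 1) 1 := by
        simp only [Xv, Yv, Zv]; rw [Stmt8Aux.X_mul_X_mul_X, Stmt8Aux.X_mul_X_mul_X]
      obtain ⟨hmem, hmax⟩ := Stmt8Aux.lead_aux K
        (Stmt8Aux.lex_lt3 1 0 (by decide) (by decide) hij hjk)
      apply Ideal.subset_span
      refine ⟨Yv K n i * Zv K n j * Xv K n k - Zv K n i * Yv K n j * Xv K n k,
        Ideal.subset_span (Or.inr ⟨i, j, k, hij, hjk, Or.inr (Or.inr rfl)⟩),
        Finsupp.single (toLex ((1:Fin 3),i)) 1 + Finsupp.single (toLex ((2:Fin 3),j)) 1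
          + Finsupp.single (toLex ((0:Fin 3),k)) 1, ?_, ?_, ?_⟩
      · rw [hf]; exact hmem
      · rw [hf]; exact hmax
      · simp only [Xv, Yv, Zv]; rw [Stmt8Aux.X_mul_X_mul_X]


end
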